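/- Fix a labeled index i ∈ {1, …, nℓ} (so A_{ii} = αℓ), assume λ I_d + (1/n)·X_{−i} A X_{−i}ᵀ is invertible with inverse Q_{−i} and that 1 + (αℓ/n)·x_iᵀ Q_{−i} x_i ≠ 0 (so Q exists). Define ω = (1/n)·Σ_{j=1}^{nℓ} y_j Q x_j and the leave-one-out vector ω_{−i} = (1/n)·Σ_{j=1, j≠i}^{nℓ} y_j Q_{−i} x_j. Then the score of the labeled point x_i decouples as ωᵀ x_i = ( ω_{−i}ᵀ x_i + (1/n)·y_i·x_iᵀ Q_{−i} x_i ) / ( 1 + (αℓ/n)·x_iᵀ Q_{−i} x_i ). -/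

import Mathlib

open Matrix

section Aux
variable {d : ℕ}

lemma aux_mul_vecMulVec (M : Matrix (Fin d) (Fin d) ℝ) (u v : Fin d → ℝ) :
    M * vecMulVec u v = vecMulVec (M *ᵥ u) v := by
  ext r s
  simp only [Matrix.mul_apply, vecMulVec_apply, Matrix.mulVec, dotProduct, Finset.sum_mul]
  exact Finset.sum_congr rfl fun t _ => by ring

lemma aux_vecMulVec_mul (M : Matrix (Fin d) (Fin d) ℝ) (u v : Fin d → ℝ) :
    vecMulVec u v * M = vecMulVec u (v ᵥ* M) := by
  ext r s
  simp only [Matrix.mul_apply, vecMulVec_apply, Matrix.vecMul, dotProduct, Finset.mul_sum]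
  exact Finset.sum_congr rfl fun t _ => by ring

lemma aux_vecMulVec_mulVec (u v x : Fin d → ℝ) :
    vecMulVec u v *ᵥ x = (v ⬝ᵥ x) • u := by
  ext r
  simp only [Matrix.mulVec, vecMulVec_apply, dotProduct, Pi.smul_apply, smul_eq_mul,
    Finset.sum_mul]
  exact Finset.sum_congr rfl fun t _ => by ring

lemma aux_smul_vecMulVec (a : ℝ) (u v : Fin d → ℝ) :
    vecMulVec (a • u) v = a • vecMulVec u v := by
  ext r s
  simp [vecMulVec_apply, mul_assoc]

lemma aux_sum_dotProduct {ι : Type*} (s : Finset ι) (f : ι → Fin d → ℝ) (w : Fin d → ℝ) :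
    (∑ j ∈ s, f j) ⬝ᵥ w = ∑ j ∈ s, f j ⬝ᵥ w := by
  simp only [dotProduct, Finset.sum_apply, Finset.sum_mul]
  exact Finset.sum_comm

end Aux

/-- Decoupling of the score at a labeled point. For a labeled index `i`
(`A_{ii} = αℓ`), with `Q_{−i}` the leave-one-out resolvent, `ω = (1/n)·Σ_{j≤nℓ} y_j Q x_j` and
`ω_{−i} = (1/n)·Σ_{j≤nℓ, j≠i} y_j Q_{−i} x_j`, the score decouples as
`ωᵀ x_i = (ω_{−i}ᵀ x_i + (1/n)·y_i·x_iᵀ Q_{−i} x_i) / (1 + (αℓ/n)·x_iᵀ Q_{−i} x_i)`. -/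
theorem score_decoupling_labeled
    (d nℓ nu : ℕ) (hd : 1 ≤ d) (hnℓ : 1 ≤ nℓ) (hnu : 1 ≤ nu)
    (X : Matrix (Fin d) (Fin (nℓ + nu)) ℝ)
    (y : Fin nℓ → ℝ) (hy : ∀ j, y j = 1 ∨ y j = -1)
    (αℓ αu lam : ℝ) (hαℓ : 0 ≤ αℓ) (hαu : 0 ≤ αu) (hlam : 0 < lam)
    (A : Matrix (Fin (nℓ + nu)) (Fin (nℓ + nu)) ℝ)
    (hA : A = Matrix.diagonal (fun i : Fin (nℓ + nu) => if (i : ℕ) < nℓ then αℓ else -αu))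
    (i : Fin (nℓ + nu)) (hi : (i : ℕ) < nℓ)
    (hinv : IsUnit (lam • (1 : Matrix (Fin d) (Fin d) ℝ)
      + ((nℓ + nu : ℕ) : ℝ)⁻¹ • (X.updateCol i 0 * A * (X.updateCol i 0)ᵀ)))
    (Qmi : Matrix (Fin d) (Fin d) ℝ)
    (hQmi : Qmi = (lam • (1 : Matrix (Fin d) (Fin d) ℝ)
      + ((nℓ + nu : ℕ) : ℝ)⁻¹ • (X.updateCol i 0 * A * (X.updateCol i 0)ᵀ))⁻¹)
    (Q : Matrix (Fin d) (Fin d) ℝ)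
    (hQ : Q = (lam • (1 : Matrix (Fin d) (Fin d) ℝ)
      + ((nℓ + nu : ℕ) : ℝ)⁻¹ • (X * A * Xᵀ))⁻¹)
    (xi : Fin d → ℝ) (hxi : xi = fun r => X r i)
    (hden : 1 + (αℓ / ((nℓ + nu : ℕ) : ℝ)) * (xi ⬝ᵥ Qmi.mulVec xi) ≠ 0)
    (ω ωmi : Fin d → ℝ)
    (hω : ω = ((nℓ + nu : ℕ) : ℝ)⁻¹ •
      ∑ j : Fin nℓ, y j • Q.mulVec (fun r => X r (Fin.castAdd nu j)))
    (hωmi : ωmi = ((nℓ + nu : ℕ) : ℝ)⁻¹ •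
      ∑ j ∈ Finset.univ.filter (fun j : Fin nℓ => Fin.castAdd nu j ≠ i),
        y j • Qmi.mulVec (fun r => X r (Fin.castAdd nu j))) :
    ω ⬝ᵥ xi
      = (ωmi ⬝ᵥ xi + ((nℓ + nu : ℕ) : ℝ)⁻¹ * (y ⟨i, hi⟩ * (xi ⬝ᵥ Qmi.mulVec xi)))
        / (1 + (αℓ / ((nℓ + nu : ℕ) : ℝ)) * (xi ⬝ᵥ Qmi.mulVec xi)) := by
  -- notation
  set c : ℝ := ((nℓ + nu : ℕ) : ℝ)⁻¹ with hc
  set M : Matrix (Fin d) (Fin d) ℝ :=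
    lam • (1 : Matrix (Fin d) (Fin d) ℝ)
      + c • (X.updateCol i 0 * A * (X.updateCol i 0)ᵀ) with hM
  set q : ℝ := xi ⬝ᵥ Qmi.mulVec xi with hq
  set s : ℝ := c * αℓ with hs
  have hdiv : αℓ / ((nℓ + nu : ℕ) : ℝ) = s := by
    rw [hs, hc, div_eq_mul_inv, mul_comm]
  rw [hdiv] at hden ⊢
  set den : ℝ := 1 + s * q with hdenEq
  have hden0 : den ≠ 0 := hden
  set u : Fin d → ℝ := Qmi *ᵥ xi with hu
  set v : Fin d → ℝ := xi ᵥ* Qmi with hv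
  set W : Matrix (Fin d) (Fin d) ℝ := vecMulVec u v with hW
  set T : Matrix (Fin d) (Fin d) ℝ := vecMulVec xi v with hT
  -- inverse facts
  have hMQ : M * Qmi = 1 := by
    rw [hQmi]; exact Matrix.mul_nonsing_inv _ ((Matrix.isUnit_iff_isUnit_det _).mp hinv)
  -- rank one split
  have hsplit : X * A * Xᵀ
      = X.updateCol i 0 * A * (X.updateCol i 0)ᵀ + αℓ • vecMulVec xi xi := by
    subst hA
    ext r t
    have key : ∀ (B : Matrix (Fin d) (Fin (nℓ + nu)) ℝ),
        (B * Matrix.diagonal (fun j : Fin (nℓ + nu) => if (j : ℕ) < nℓ then αℓ else -αu) * Bᵀ) r t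
          = ∑ j, B r j * (if (j : ℕ) < nℓ then αℓ else -αu) * B t j := by
      intro B
      rw [Matrix.mul_apply]
      refine Finset.sum_congr rfl fun j _ => ?_
      rw [Matrix.mul_diagonal, Matrix.transpose_apply]
    rw [Matrix.add_apply, key, key, Matrix.smul_apply, vecMulVec_apply, smul_eq_mul]
    rw [← Finset.add_sum_erase _ _ (Finset.mem_univ i),
        ← Finset.add_sum_erase _
          (fun j => X.updateCol i 0 r j * (if (j : ℕ) < nℓ then αℓ else -αu)
            * X.updateCol i 0 t j) (Finset.mem_univ i)]
    have herase : ∀ j ∈ Finset.univ.erase i,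
        X.updateCol i 0 r j * (if (j : ℕ) < nℓ then αℓ else -αu) * X.updateCol i 0 t j
          = X r j * (if (j : ℕ) < nℓ then αℓ else -αu) * X t j := by
      intro j hj
      rw [Matrix.updateCol_ne (Finset.ne_of_mem_erase hj),
          Matrix.updateCol_ne (Finset.ne_of_mem_erase hj)]
    rw [Finset.sum_congr rfl herase]
    have h0r : X.updateCol i 0 r i = 0 := by simp [Matrix.updateCol_self]
    have h0t : X.updateCol i 0 t i = 0 := by simp [Matrix.updateCol_self]
    rw [h0r, h0t, if_pos hi, hxi]
    ring
  -- the full resolvent matrix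
  have hN : lam • (1 : Matrix (Fin d) (Fin d) ℝ) + c • (X * A * Xᵀ)
      = M + s • vecMulVec xi xi := by
    rw [hsplit, smul_add, smul_smul, ← add_assoc, hM, hs]
  -- Sherman–Morrison pieces
  have hMu : M *ᵥ u = xi := by
    rw [hu, Matrix.mulVec_mulVec, hMQ, Matrix.one_mulVec]
  have hMW : M * W = T := by rw [hW, aux_mul_vecMulVec, hMu, hT]
  have hVQ : vecMulVec xi xi * Qmi = T := by rw [aux_vecMulVec_mul, ← hv, hT]
  have hVu : vecMulVec xi xi *ᵥ u = q • xi := by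
    rw [aux_vecMulVec_mulVec, hq, hu]
  have hVW : vecMulVec xi xi * W = q • T := by
    rw [hW, aux_mul_vecMulVec, hVu, aux_smul_vecMulVec, hT]
  -- right inverse
  have hNR : (M + s • vecMulVec xi xi) * (Qmi - (s / den) • W) = 1 := by
    have expand : (M + s • vecMulVec xi xi) * (Qmi - (s / den) • W)
        = M * Qmi - (s / den) • (M * W)
          + (s • (vecMulVec xi xi * Qmi) - ((s / den) * s) • (vecMulVec xi xi * W)) := by
      simp only [add_mul, Matrix.mul_sub, Matrix.smul_mul, Matrix.mul_smul, smul_smul]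
    rw [expand, hMQ, hMW, hVQ, hVW, smul_smul]
    have hmod : (1 : Matrix (Fin d) (Fin d) ℝ) - (s / den) • T
          + (s • T - (s / den * s * q) • T)
        = 1 + (s - s / den - s / den * s * q) • T := by
      module
    rw [hmod]
    have hcoef : s - s / den - s / den * s * q = 0 := by
      field_simp
      rw [hdenEq]; ring
    rw [hcoef, zero_smul, add_zero]
  have hQR : Q = Qmi - (s / den) • W := by
    rw [hQ, hN]; exact Matrix.inv_eq_right_inv hNR
  -- per-term decoupling
  have hterm : ∀ w : Fin d → ℝ,
      (Q *ᵥ w) ⬝ᵥ xi = (xi ⬝ᵥ Qmi *ᵥ w) / den := by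
    intro w
    rw [hQR, Matrix.sub_mulVec, Matrix.smul_mulVec, hW, aux_vecMulVec_mulVec,
      sub_dotProduct, smul_dotProduct, smul_dotProduct,
      smul_eq_mul, smul_eq_mul]
    have h1 : (Qmi *ᵥ w) ⬝ᵥ xi = xi ⬝ᵥ Qmi *ᵥ w := dotProduct_comm _ _
    have h2 : u ⬝ᵥ xi = q := by
      rw [hu, dotProduct_comm, hq]
    have h3 : v ⬝ᵥ w = xi ⬝ᵥ Qmi *ᵥ w := by
      rw [hv, ← Matrix.dotProduct_mulVec]
    rw [h1, h2, h3]
    field_simp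
    ring
  -- the index j₀
  set j₀ : Fin nℓ := ⟨(i : ℕ), hi⟩ with hj₀
  have hcastj₀ : Fin.castAdd nu j₀ = i := by
    apply Fin.ext; simp [hj₀]
  have hxj₀ : (fun r => X r (Fin.castAdd nu j₀)) = xi := by
    rw [hcastj₀, hxi]
  -- expand ω ⬝ᵥ xi
  have hωdot : ω ⬝ᵥ xi
      = c * ∑ j : Fin nℓ, y j * ((xi ⬝ᵥ Qmi *ᵥ (fun r => X r (Fin.castAdd nu j))) / den) := by
    rw [hω, smul_dotProduct, aux_sum_dotProduct, smul_eq_mul]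
    congr 1
    refine Finset.sum_congr rfl fun j _ => ?_
    rw [smul_dotProduct, smul_eq_mul, hterm]
  have hωmidot : ωmi ⬝ᵥ xi
      = c * ∑ j ∈ Finset.univ.filter (fun j : Fin nℓ => Fin.castAdd nu j ≠ i),
          y j * (xi ⬝ᵥ Qmi *ᵥ (fun r => X r (Fin.castAdd nu j))) := by
    rw [hωmi, smul_dotProduct, aux_sum_dotProduct, smul_eq_mul]
    congr 1
    refine Finset.sum_congr rfl fun j _ => ?_
    rw [smul_dotProduct, smul_eq_mul, dotProduct_comm]
  -- split the full sum
  have hfilter : Finset.univ.filter (fun j : Fin nℓ => ¬ Fin.castAdd nu j ≠ i) = {j₀} := by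
    ext j
    simp only [Finset.mem_filter, Finset.mem_univ, true_and, not_not, Finset.mem_singleton]
    constructor
    · intro h; apply Fin.ext
      have := congrArg Fin.val h
      simpa [hj₀] using this
    · intro h; rw [h, hcastj₀]
  have hsum : ∑ j : Fin nℓ, y j * (xi ⬝ᵥ Qmi *ᵥ (fun r => X r (Fin.castAdd nu j)))
      = (∑ j ∈ Finset.univ.filter (fun j : Fin nℓ => Fin.castAdd nu j ≠ i),
          y j * (xi ⬝ᵥ Qmi *ᵥ (fun r => X r (Fin.castAdd nu j)))) + y j₀ * q := by
    rw [← Finset.sum_filter_add_sum_filter_not Finset.univ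
      (fun j : Fin nℓ => Fin.castAdd nu j ≠ i)]
    congr 1
    rw [hfilter, Finset.sum_singleton, hxj₀, ← hq]
  -- finish
  rw [hωdot, hωmidot]
  have : ∑ j : Fin nℓ, y j * ((xi ⬝ᵥ Qmi *ᵥ (fun r => X r (Fin.castAdd nu j))) / den)
      = (∑ j : Fin nℓ, y j * (xi ⬝ᵥ Qmi *ᵥ (fun r => X r (Fin.castAdd nu j)))) / den := by
    rw [Finset.sum_div]
    exact Finset.sum_congr rfl fun j _ => by ring
  rw [this, hsum]
  have hyj : y ⟨i, hi⟩ = y j₀ := rfl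
  rw [hyj]
  field_simp
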